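/- For all positive integers r and m, ∑_{j=1}^{m} C(m, j)/j^r = ∑_{m ≥ n₁ ≥ n₂ ≥ ⋯ ≥ n_r ≥ 1} (2^{n_r} − 1)/(n₁ n₂ ⋯ n_r), where C denotes binomial coefficients; i.e., the binomial sum equals ζ*_m({1}_r; {1}_{r-1}, 2) − ζ*_m({1}_r) in terms of (weighted) truncated multiple zeta star values. -/

import Mathlib

/-- Truncated multiple zeta star value `ζ*_m({1}_r) = ∑_{m ≥ n₁ ≥ ⋯ ≥ n_r ≥ 1} 1/(n₁⋯n_r)`. -/
noncomputable def pstar : ℕ → ℕ → ℝ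
  | 0, _ => 1
  | r + 1, m => ∑ n ∈ Finset.Icc 1 m, (1 / (n : ℝ)) * pstar r n

/-- Weighted truncated multiple zeta star value
`ζ*_m({1}_r ; {1}_{r-1}, 2) = ∑_{m ≥ n₁ ≥ ⋯ ≥ n_r ≥ 1} 2^{n_r}/(n₁⋯n_r)` (for `r ≥ 1`). -/
noncomputable def wstar : ℕ → ℕ → ℝ
  | 0, _ => 1
  | 1, m => ∑ n ∈ Finset.Icc 1 m, (2 : ℝ) ^ n / (n : ℝ)
  | r + 2, m => ∑ n ∈ Finset.Icc 1 m, (1 / (n : ℝ)) * wstar (r + 1) n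

/-- Hockey-stick with a harmonic weight: `∑_{n=j}^m C(n,j)/n = C(m,j)/j` for `j ≥ 1`. -/
lemma hockey (j : ℕ) (hj : 1 ≤ j) : ∀ m : ℕ,
    ∑ n ∈ Finset.Icc j m, (n.choose j : ℝ) / (n : ℝ) = (m.choose j : ℝ) / (j : ℝ) := by
  intro m
  induction m with
  | zero =>
    rw [Finset.Icc_eq_empty (by omega)]
    simp [Nat.choose_eq_zero_of_lt hj]
  | succ m ih =>
    by_cases h : j ≤ m + 1
    · rw [Finset.sum_Icc_succ_top h, ih]
      obtain ⟨k, rfl⟩ : ∃ k, j = k + 1 := ⟨j - 1, by omega⟩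
      have key : (m + 1) * Nat.choose m k = Nat.choose (m + 1) (k + 1) * (k + 1) :=
        Nat.add_one_mul_choose_eq m k
      have hkey : ((m : ℝ) + 1) * (Nat.choose m k : ℝ)
          = (Nat.choose (m + 1) (k + 1) : ℝ) * ((k : ℝ) + 1) := by
        exact_mod_cast congrArg (Nat.cast : ℕ → ℝ) key
      have hpascal : (Nat.choose (m + 1) (k + 1) : ℝ)
          = (Nat.choose m k : ℝ) + (Nat.choose m (k + 1) : ℝ) := by
        rw [Nat.choose_succ_succ]; push_cast; ring
      have hm1 : ((m : ℝ) + 1) ≠ 0 := by positivity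
      have hk1 : ((k : ℝ) + 1) ≠ 0 := by positivity
      push_cast
      field_simp
      linear_combination (-((m:ℝ)+1))*hpascal - hkey
    · rw [Finset.Icc_eq_empty (by omega)]
      simp [Nat.choose_eq_zero_of_lt (by omega : m + 1 < j)]

/-- Recursion for the binomial sums. -/
lemma step (r m : ℕ) :
    ∑ j ∈ Finset.Icc 1 m, (m.choose j : ℝ) / (j : ℝ) ^ (r + 1)
      = ∑ n ∈ Finset.Icc 1 m,
          (1 / (n : ℝ)) * ∑ j ∈ Finset.Icc 1 n, (n.choose j : ℝ) / (j : ℝ) ^ r := by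
  have h1 : ∀ n : ℕ, Finset.Icc 1 n = Finset.Ico 1 (n + 1) := fun n => by
    rw [Nat.Icc_eq_range', Nat.Ico_eq_range']
  calc ∑ j ∈ Finset.Icc 1 m, (m.choose j : ℝ) / (j : ℝ) ^ (r + 1)
      = ∑ j ∈ Finset.Icc 1 m, (1 / (j : ℝ) ^ r) *
          ∑ n ∈ Finset.Icc j m, (n.choose j : ℝ) / (n : ℝ) := by
        refine Finset.sum_congr rfl fun j hj => ?_
        rw [hockey j (Finset.mem_Icc.mp hj).1 m]
        rw [pow_succ]
        field_simp
    _ = ∑ j ∈ Finset.Icc 1 m, ∑ n ∈ Finset.Icc j m,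
          (1 / (n : ℝ)) * ((n.choose j : ℝ) / (j : ℝ) ^ r) := by
        refine Finset.sum_congr rfl fun j _ => ?_
        rw [Finset.mul_sum]
        refine Finset.sum_congr rfl fun n _ => ?_
        ring
    _ = ∑ n ∈ Finset.Icc 1 m, ∑ j ∈ Finset.Icc 1 n,
          (1 / (n : ℝ)) * ((n.choose j : ℝ) / (j : ℝ) ^ r) := by
        simp only [← Finset.Ico_add_one_right_eq_Icc]
        exact Finset.sum_Ico_Ico_comm 1 (m + 1)
          (fun j n => (1 / (n : ℝ)) * ((n.choose j : ℝ) / (j : ℝ) ^ r))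
    _ = ∑ n ∈ Finset.Icc 1 m,
          (1 / (n : ℝ)) * ∑ j ∈ Finset.Icc 1 n, (n.choose j : ℝ) / (j : ℝ) ^ r := by
        refine Finset.sum_congr rfl fun n _ => ?_
        rw [Finset.mul_sum]

/-- Base case `r = 1`. -/
lemma base (m : ℕ) :
    ∑ j ∈ Finset.Icc 1 m, (m.choose j : ℝ) / (j : ℝ)
      = ∑ n ∈ Finset.Icc 1 m, ((2 : ℝ) ^ n - 1) / (n : ℝ) := by
  induction m with
  | zero => simp
  | succ m ih =>
    have h1 : (1 : ℕ) ≤ m + 1 := by omega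
    have expand : ∑ j ∈ Finset.Icc 1 (m + 1), ((m + 1).choose j : ℝ) / (j : ℝ)
        = ∑ j ∈ Finset.Icc 1 m, (m.choose j : ℝ) / (j : ℝ)
          + ∑ j ∈ Finset.Icc 1 (m + 1), (m.choose (j - 1) : ℝ) / (j : ℝ) := by
      have hsplit : ∀ j ∈ Finset.Icc 1 (m + 1),
          ((m + 1).choose j : ℝ) / (j : ℝ)
            = (m.choose j : ℝ) / (j : ℝ) + (m.choose (j - 1) : ℝ) / (j : ℝ) := by
        intro j hj
        have hj' := Finset.mem_Icc.mp hj
        obtain ⟨k, rfl⟩ : ∃ k, j = k + 1 := ⟨j - 1, by omega⟩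
        rw [Nat.choose_succ_succ]
        push_cast
        ring
      rw [Finset.sum_congr rfl hsplit, Finset.sum_add_distrib,
        Finset.sum_Icc_succ_top h1, Nat.choose_eq_zero_of_lt (by omega)]
      push_cast
      ring
    have hsecond : ∑ j ∈ Finset.Icc 1 (m + 1), (m.choose (j - 1) : ℝ) / (j : ℝ)
        = ((2 : ℝ) ^ (m + 1) - 1) / ((m : ℝ) + 1) := by
      have heach : ∀ j ∈ Finset.Icc 1 (m + 1),
          (m.choose (j - 1) : ℝ) / (j : ℝ) = ((m + 1).choose j : ℝ) / ((m : ℝ) + 1) := by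
        intro j hj
        have hj' := Finset.mem_Icc.mp hj
        obtain ⟨k, rfl⟩ : ∃ k, j = k + 1 := ⟨j - 1, by omega⟩
        have key : (m + 1) * Nat.choose m k = Nat.choose (m + 1) (k + 1) * (k + 1) :=
          Nat.add_one_mul_choose_eq m k
        have hkey : ((m : ℝ) + 1) * (Nat.choose m k : ℝ)
            = (Nat.choose (m + 1) (k + 1) : ℝ) * ((k : ℝ) + 1) := by
          exact_mod_cast congrArg (Nat.cast : ℕ → ℝ) key
        have hm1 : ((m : ℝ) + 1) ≠ 0 := by positivity
        have hk1 : ((k : ℝ) + 1) ≠ 0 := by positivity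
        simp only [Nat.add_sub_cancel]
        push_cast
        field_simp
        linarith [hkey]
      rw [Finset.sum_congr rfl heach, ← Finset.sum_div]
      have hsum : ∑ j ∈ Finset.Icc 1 (m + 1), ((m + 1).choose j : ℝ)
          = (2 : ℝ) ^ (m + 1) - 1 := by
        have h2 : ∑ j ∈ Finset.range (m + 2), ((m + 1).choose j : ℝ) = (2 : ℝ) ^ (m + 1) := by
          exact_mod_cast Nat.sum_range_choose (m + 1)
        have h3 : Finset.range (m + 2) = insert 0 (Finset.Icc 1 (m + 1)) := by
          ext x
          simp [Finset.mem_range, Finset.mem_Icc]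
          omega
        rw [h3, Finset.sum_insert (by simp)] at h2
        simp at h2
        linarith
      rw [hsum]
    rw [expand, ih, hsecond, Finset.sum_Icc_succ_top h1]
    push_cast
    ring

/-- For all positive integers `r` and `m`,
`∑_{j=1}^{m} C(m,j)/j^r = ∑_{m ≥ n₁ ≥ ⋯ ≥ n_r ≥ 1} (2^{n_r} − 1)/(n₁ ⋯ n_r)`, i.e. the
binomial sum equals `ζ*_m({1}_r ; {1}_{r-1}, 2) − ζ*_m({1}_r)`. -/
theorem stmt19 (r m : ℕ) (hr : 1 ≤ r) (hm : 1 ≤ m) :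
    ∑ j ∈ Finset.Icc 1 m, (m.choose j : ℝ) / (j : ℝ) ^ r = wstar r m - pstar r m := by
  clear hm
  induction r generalizing m with
  | zero => omega
  | succ r ih =>
    rcases Nat.eq_zero_or_pos r with rfl | hrpos
    · simp only [zero_add, pow_one]
      rw [base m, wstar, pstar]
      rw [← Finset.sum_sub_distrib]
      refine Finset.sum_congr rfl fun n hn => ?_
      have hn1 : 1 ≤ n := (Finset.mem_Icc.mp hn).1
      have : (n : ℝ) ≠ 0 := by positivity
      rw [show pstar 0 n = 1 from rfl, sub_div, mul_one]
    · rw [step r m]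
      have hw : wstar (r + 1) m = ∑ n ∈ Finset.Icc 1 m, (1 / (n : ℝ)) * wstar r n := by
        obtain ⟨s, rfl⟩ : ∃ s, r = s + 1 := ⟨r - 1, by omega⟩
        rfl
      rw [hw, pstar, ← Finset.sum_sub_distrib]
      refine Finset.sum_congr rfl fun n hn => ?_
      rw [ih n hrpos, mul_sub]
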